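/- Let F : ℂ → ℂ be continuous on the closed strip 𝒯¹, holomorphic on its interior, and suppose F(t + i) = F(t) for all t ∈ ℝ. If there exist a constant C > 0 and a natural number p such that |F(z)| ≤ C (1 + |Re z|)^p for all z ∈ 𝒯¹, then F is constant on 𝒯¹. -/

import Mathlib

open Complex Set Metric Filter intervalIntegral Asymptotics MeasureTheory

namespace StripLiouvilleAux

lemma abs_sub_le_of_mem_uIcc {a b t : ℝ} (h : t ∈ Set.uIcc a b) : |t - a| ≤ |b - a| := by
  rcases le_total a b with hab | hab
  · rw [Set.uIcc_of_le hab] at h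
    rw [_root_.abs_of_nonneg (by linarith [h.1] : (0:ℝ) ≤ t - a), _root_.abs_of_nonneg (by linarith : (0:ℝ) ≤ b - a)]
    linarith [h.2]
  · rw [Set.uIcc_of_ge hab] at h
    rw [_root_.abs_of_nonpos (by linarith [h.2] : t - a ≤ 0), _root_.abs_of_nonpos (by linarith : b - a ≤ 0)]
    linarith [h.1]

lemma abs_sub_le_max_of_mem_uIcc {a b x₀ t : ℝ} (h : t ∈ Set.uIcc a b) :
    |t - x₀| ≤ max |a - x₀| |b - x₀| := by
  rcases le_total a b with hab | hab
  · rw [Set.uIcc_of_le hab] at h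
    rw [abs_le]
    constructor
    · have h1 := neg_abs_le (a - x₀)
      have h2 := le_max_left |a - x₀| |b - x₀|
      linarith [h.1]
    · have h1 := le_abs_self (b - x₀)
      have h2 := le_max_right |a - x₀| |b - x₀|
      linarith [h.2]
  · rw [Set.uIcc_of_ge hab] at h
    rw [abs_le]
    constructor
    · have h1 := neg_abs_le (b - x₀)
      have h2 := le_max_right |a - x₀| |b - x₀|
      linarith [h.1]
    · have h1 := le_abs_self (a - x₀)
      have h2 := le_max_left |a - x₀| |b - x₀|
      linarith [h.2]

/-- Morera-type removability of a horizontal line. -/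
lemma removable_line {f : ℂ → ℂ} {c : ℝ} {z₀ : ℂ} {R : ℝ} (hR : 0 < R) (him : z₀.im = c)
    (hc : ContinuousOn f (ball z₀ R))
    (hd : ∀ z ∈ ball z₀ R, z.im ≠ c → DifferentiableAt ℂ f z) :
    DifferentiableAt ℂ f z₀ := by
  have key : ∀ x y : ℝ, (x + y*I : ℂ) ∈ ball z₀ R → ∀ s t : ℝ,
      |s - z₀.re| ≤ |x - z₀.re| → |t - c| ≤ |y - c| → (s + t*I : ℂ) ∈ ball z₀ R := by
    intro x y hxy s t hs ht
    rw [mem_ball, Complex.dist_eq_re_im] at hxy ⊢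
    have e1 : ((s:ℂ) + t*I).re = s := by simp
    have e2 : ((s:ℂ) + t*I).im = t := by simp
    have e3 : ((x:ℂ) + y*I).re = x := by simp
    have e4 : ((x:ℂ) + y*I).im = y := by simp
    rw [e3, e4, him] at hxy
    rw [e1, e2, him]
    have h1 : (s - z₀.re)^2 ≤ (x - z₀.re)^2 := by
      rw [← _root_.sq_abs (s - z₀.re), ← _root_.sq_abs (x - z₀.re)]
      exact pow_le_pow_left₀ (abs_nonneg _) hs 2
    have h2 : (t - c)^2 ≤ (y - c)^2 := by
      rw [← _root_.sq_abs (t - c), ← _root_.sq_abs (y - c)]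
      exact pow_le_pow_left₀ (abs_nonneg _) ht 2
    calc Real.sqrt ((s - z₀.re)^2 + (t - c)^2)
        ≤ Real.sqrt ((x - z₀.re)^2 + (y - c)^2) := Real.sqrt_le_sqrt (by linarith)
      _ < R := hxy
  have rectmem : ∀ x u v : ℝ, (x + v*I:ℂ) ∈ ball z₀ R → (u + v*I:ℂ) ∈ ball z₀ R →
      ∀ s ∈ Set.uIcc x u, ∀ t ∈ Set.uIcc c v, (s + t*I : ℂ) ∈ ball z₀ R := by
    intro x u v hx hu s hs t ht
    have h1 : |s - z₀.re| ≤ max |x - z₀.re| |u - z₀.re| := abs_sub_le_max_of_mem_uIcc hs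
    have h2 : |t - c| ≤ |v - c| := abs_sub_le_of_mem_uIcc ht
    rcases le_total |x - z₀.re| |u - z₀.re| with hmax | hmax
    · exact key u v hu s t (by rwa [max_eq_right hmax] at h1) h2
    · exact key x v hx s t (by rwa [max_eq_left hmax] at h1) h2
  have conth : ∀ x u y : ℝ, (∀ s ∈ Set.uIcc x u, (s + y*I:ℂ) ∈ ball z₀ R) →
      IntervalIntegrable (fun t : ℝ => f (t + y*I)) volume x u := by
    intro x u y h
    apply ContinuousOn.intervalIntegrable
    exact hc.comp ((Complex.continuous_ofReal.add continuous_const).continuousOn) h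
  have contv : ∀ x y v : ℝ, (∀ t ∈ Set.uIcc y v, (x + t*I:ℂ) ∈ ball z₀ R) →
      IntervalIntegrable (fun t : ℝ => f (x + t*I)) volume y v := by
    intro x y v h
    apply ContinuousOn.intervalIntegrable
    exact hc.comp ((continuous_const.add (Complex.continuous_ofReal.mul continuous_const)).continuousOn) h
  have hre : ∀ a b : ℝ, ((a:ℂ) + b*I).re = a := fun a b => by simp
  have him' : ∀ a b : ℝ, ((a:ℂ) + b*I).im = b := fun a b => by simp
  have memuIcc : ∀ a b t : ℝ, t ∈ Set.Ioo (min a b) (max a b) → t ∈ Set.uIcc a b := by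
    intro a b t ht
    rcases le_total a b with hab | hab
    · rw [min_eq_left hab, max_eq_right hab] at ht
      exact Set.mem_uIcc.2 (Or.inl ⟨ht.1.le, ht.2.le⟩)
    · rw [min_eq_right hab, max_eq_left hab] at ht
      exact Set.mem_uIcc.2 (Or.inr ⟨ht.1.le, ht.2.le⟩)
  have rect : ∀ x u v : ℝ, (x + v*I:ℂ) ∈ ball z₀ R → (u + v*I:ℂ) ∈ ball z₀ R →
      (∫ t in x..u, f (t + c*I)) - (∫ t in x..u, f (t + v*I))
        + I • (∫ t in c..v, f (u + t*I)) - I • (∫ t in c..v, f (x + t*I)) = 0 := by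
    intro x u v hx hu
    have hsub : (Set.uIcc x u ×ℂ Set.uIcc c v) ⊆ ball z₀ R := by
      intro z hz
      have := rectmem x u v hx hu z.re hz.1 z.im hz.2
      rwa [Complex.re_add_im] at this
    have H := Complex.integral_boundary_rect_eq_zero_of_differentiable_on_off_countable f
      (x + c*I) (u + v*I) ∅ Set.countable_empty
      (by rw [hre, hre, him', him']; exact hc.mono hsub)
      (by
        rw [hre, hre, him', him']
        intro zz hzz
        rw [Set.mem_diff] at hzz
        have h1 : zz.re ∈ Set.Ioo (min x u) (max x u) := hzz.1.1
        have h2 : zz.im ∈ Set.Ioo (min c v) (max c v) := hzz.1.2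
        have hzb : zz ∈ ball z₀ R := hsub ⟨memuIcc _ _ _ h1, memuIcc _ _ _ h2⟩
        have hne : zz.im ≠ c := by
          rcases le_total c v with hcv | hcv
          · rw [min_eq_left hcv] at h2
            exact (ne_of_gt h2.1)
          · rw [max_eq_left hcv] at h2
            exact (ne_of_lt h2.2)
        exact hd zz hzb hne)
    rw [hre, hre, him', him'] at H
    exact H
  set g : ℂ → ℂ := fun w =>
    (∫ t in z₀.re..w.re, f (t + c*I)) + I * ∫ t in c..w.im, f (w.re + t*I) with hgdef
  have hz₀eq : ((z₀.re:ℂ) + c*I) = z₀ := by rw [← him, Complex.re_add_im]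
  have hg : ∀ w ∈ ball z₀ R, HasDerivAt g (f w) w := by
    intro w hw
    have mw : ((w.re:ℂ) + w.im*I) ∈ ball z₀ R := by rw [Complex.re_add_im]; exact hw
    rw [hasDerivAt_iff_isLittleO, Asymptotics.isLittleO_iff]
    intro ε hε
    have hfw : ContinuousAt f w := hc.continuousAt (isOpen_ball.mem_nhds hw)
    obtain ⟨δ₁, hδ₁pos, hδ₁⟩ := Metric.continuousAt_iff.1 hfw (ε/2) (by positivity)
    have hRw : 0 < R - dist w z₀ := by rw [mem_ball] at hw; linarith
    set δ := min (δ₁/4) ((R - dist w z₀)/4) with hδdef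
    have hδpos : 0 < δ := lt_min (by positivity) (by positivity)
    have hnear : ∀ ζ : ℂ, dist ζ w ≤ 2*δ → ζ ∈ ball z₀ R := by
      intro ζ hζ
      rw [mem_ball]
      have h4 := min_le_right (δ₁/4) ((R - dist w z₀)/4)
      calc dist ζ z₀ ≤ dist ζ w + dist w z₀ := dist_triangle _ _ _
        _ < R := by linarith
    have hfnear : ∀ ζ : ℂ, dist ζ w ≤ 2*δ → ‖f ζ - f w‖ ≤ ε/2 := by
      intro ζ hζ
      have h4 := min_le_left (δ₁/4) ((R - dist w z₀)/4)
      have hlt : dist ζ w < δ₁ := by linarith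
      have := hδ₁ hlt
      rw [dist_eq_norm] at this
      exact this.le
    filter_upwards [Metric.ball_mem_nhds w hδpos] with w' hw'
    have hw'w : dist w' w < δ := mem_ball.1 hw'
    have hre_le : |w'.re - w.re| ≤ dist w' w := by
      rw [Complex.dist_eq]
      simpa [Complex.sub_re] using Complex.abs_re_le_norm (w' - w)
    have him_le : |w'.im - w.im| ≤ dist w' w := by
      rw [Complex.dist_eq]
      simpa [Complex.sub_im] using Complex.abs_im_le_norm (w' - w)
    have hccle : ∀ y : ℝ, |c - c| ≤ |y - c| := by
      intro y; simp only [sub_self, abs_zero]; exact abs_nonneg _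
    -- memberships
    have m1 : ((w.re:ℂ) + w'.im*I) ∈ ball z₀ R := by
      apply hnear
      rw [Complex.dist_eq_re_im, hre, him']
      rw [sub_self]
      have : ((0:ℝ)^2 + (w'.im - w.im)^2) = (w'.im - w.im)^2 := by ring
      rw [this, Real.sqrt_sq_eq_abs]
      linarith
    have m2 : w' ∈ ball z₀ R := hnear w' (by linarith)
    have mw' : ((w'.re:ℂ) + w'.im*I) ∈ ball z₀ R := by rw [Complex.re_add_im]; exact m2
    have mwc : ((w.re:ℂ) + c*I) ∈ ball z₀ R :=
      key w.re w.im mw w.re c (le_refl _) (hccle w.im)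
    have mw'c : ((w'.re:ℂ) + c*I) ∈ ball z₀ R :=
      key w'.re w'.im mw' w'.re c (le_refl _) (hccle w'.im)
    -- integrabilities
    have i1 : IntervalIntegrable (fun t : ℝ => f (t + c*I)) volume z₀.re w.re := by
      apply conth
      intro s hs
      exact rectmem z₀.re w.re c (by rw [hz₀eq]; exact mem_ball_self hR) mwc s hs c Set.left_mem_uIcc
    have i2 : IntervalIntegrable (fun t : ℝ => f (t + c*I)) volume w.re w'.re := by
      apply conth
      intro s hs
      exact rectmem w.re w'.re c mwc mw'c s hs c Set.left_mem_uIcc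
    have i3 : IntervalIntegrable (fun t : ℝ => f (w.re + t*I)) volume c w.im := by
      apply contv
      intro t ht
      exact rectmem w.re w.re w.im mw mw w.re Set.left_mem_uIcc t ht
    have i4 : IntervalIntegrable (fun t : ℝ => f (w.re + t*I)) volume w.im w'.im := by
      apply contv
      intro t ht
      apply hnear
      rw [Complex.dist_eq_re_im, hre, him', sub_self]
      have : ((0:ℝ)^2 + (t - w.im)^2) = (t - w.im)^2 := by ring
      rw [this, Real.sqrt_sq_eq_abs]
      have := (abs_sub_le_of_mem_uIcc ht).trans him_le
      linarith
    have i5 : IntervalIntegrable (fun t : ℝ => f (t + w'.im*I)) volume w.re w'.re := by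
      apply conth
      intro s hs
      apply hnear
      have hb : dist ((s:ℂ) + w'.im*I) w ≤ |s - w.re| + |w'.im - w.im| := by
        rw [Complex.dist_eq]
        have := Complex.norm_le_abs_re_add_abs_im ((s:ℂ) + w'.im*I - w)
        simpa [Complex.sub_re, Complex.sub_im, hre, him'] using this
      have h1 := (abs_sub_le_of_mem_uIcc hs).trans hre_le
      linarith
    -- rectangle identity and additivity
    have e1 := integral_add_adjacent_intervals i1 i2
    have e2 := rect w.re w'.re w'.im m1 mw'
    have e3 := integral_add_adjacent_intervals i3 i4
    have key_eq : g w' - g w - (w' - w) • f w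
        = (∫ t in w.re..w'.re, (f (t + w'.im*I) - f w))
          + I * ∫ t in w.im..w'.im, (f (w.re + t*I) - f w) := by
      have e4 : ∫ t in w.re..w'.re, (f (t + w'.im*I) - f w)
          = (∫ t in w.re..w'.re, f (t + w'.im*I)) - (w'.re - w.re) • f w := by
        rw [intervalIntegral.integral_sub i5 intervalIntegrable_const,
          intervalIntegral.integral_const]
      have e5 : ∫ t in w.im..w'.im, (f (w.re + t*I) - f w)
          = (∫ t in w.im..w'.im, f (w.re + t*I)) - (w'.im - w.im) • f w := by
        rw [intervalIntegral.integral_sub i4 intervalIntegrable_const,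
          intervalIntegral.integral_const]
      have hww : (w' - w : ℂ) = ((w'.re - w.re : ℝ) : ℂ) + ((w'.im - w.im : ℝ) : ℂ)*I := by
        apply Complex.ext <;> simp
      rw [e4, e5, hww]
      simp only [hgdef, smul_eq_mul, Complex.real_smul] at e2 ⊢
      push_cast
      linear_combination (-1 : ℂ) * e1 + e2 + (-I) * e3
    rw [key_eq]
    have n1 : ‖∫ t in w.re..w'.re, (f (t + w'.im*I) - f w)‖ ≤ ε/2 * |w'.re - w.re| := by
      apply intervalIntegral.norm_integral_le_of_norm_le_const
      intro t ht
      have ht' : t ∈ Set.uIcc w.re w'.re := Set.uIoc_subset_uIcc ht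
      apply hfnear
      have hb : dist ((t:ℂ) + w'.im*I) w ≤ |t - w.re| + |w'.im - w.im| := by
        rw [Complex.dist_eq]
        have := Complex.norm_le_abs_re_add_abs_im ((t:ℂ) + w'.im*I - w)
        simpa [Complex.sub_re, Complex.sub_im, hre, him'] using this
      have h1 := (abs_sub_le_of_mem_uIcc ht').trans hre_le
      linarith
    have n2 : ‖∫ t in w.im..w'.im, (f (w.re + t*I) - f w)‖ ≤ ε/2 * |w'.im - w.im| := by
      apply intervalIntegral.norm_integral_le_of_norm_le_const
      intro t ht
      have ht' : t ∈ Set.uIcc w.im w'.im := Set.uIoc_subset_uIcc ht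
      apply hfnear
      have hb : dist ((w.re:ℂ) + t*I) w ≤ |t - w.im| := by
        rw [Complex.dist_eq_re_im, hre, him', sub_self]
        have : ((0:ℝ)^2 + (t - w.im)^2) = (t - w.im)^2 := by ring
        rw [this, Real.sqrt_sq_eq_abs]
      have h1 := (abs_sub_le_of_mem_uIcc ht').trans him_le
      linarith
    have hnorm : ‖w' - w‖ = dist w' w := (dist_eq_norm w' w).symm
    calc ‖(∫ t in w.re..w'.re, (f (t + w'.im*I) - f w))
          + I * ∫ t in w.im..w'.im, (f (w.re + t*I) - f w)‖
        ≤ ‖∫ t in w.re..w'.re, (f (t + w'.im*I) - f w)‖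
          + ‖I * ∫ t in w.im..w'.im, (f (w.re + t*I) - f w)‖ := norm_add_le _ _
      _ ≤ ε/2 * |w'.re - w.re| + ε/2 * |w'.im - w.im| := by
          rw [norm_mul, Complex.norm_I, one_mul]
          exact add_le_add n1 n2
      _ ≤ ε * ‖w' - w‖ := by
          rw [hnorm]
          have h1 := hre_le
          have h2 := him_le
          nlinarith [dist_nonneg (x := w') (y := w), hε.le]
  -- conclude
  have hgd : DifferentiableOn ℂ g (ball z₀ R) :=
    fun w hw => ((hg w hw).differentiableAt).differentiableWithinAt
  have hana : AnalyticOnNhd ℂ g (ball z₀ R) := hgd.analyticOnNhd isOpen_ball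
  have hderiv : DifferentiableOn ℂ (deriv g) (ball z₀ R) :=
    (hana.deriv).differentiableOn
  have hda : DifferentiableAt ℂ (deriv g) z₀ :=
    hderiv.differentiableAt (isOpen_ball.mem_nhds (mem_ball_self hR))
  apply hda.congr_of_eventuallyEq
  filter_upwards [isOpen_ball.mem_nhds (mem_ball_self hR)] with w hw
  exact ((hg w hw).deriv).symm


lemma tendsto_aux (p : ℕ) :
    Filter.Tendsto (fun r : ℝ => (1 + |Real.log r|/(2*Real.pi))^p * r) (nhdsWithin 0 (Set.Ioi 0)) (nhds 0) := by
  have pi_pos := Real.pi_pos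
  have h1 : Filter.Tendsto (fun s : ℝ => (1 + s/(2*Real.pi))^p * Real.exp (-s)) atTop (nhds 0) := by
    apply squeeze_zero' (g := fun s => (1/Real.pi)^p * (s^p * Real.exp (-s)))
    · filter_upwards [Filter.eventually_ge_atTop (0:ℝ)] with s hs
      have : (0:ℝ) ≤ 1 + s/(2*Real.pi) := by positivity
      positivity
    · filter_upwards [Filter.eventually_ge_atTop (2*Real.pi)] with s hs
      have h1 : (1:ℝ) ≤ s/(2*Real.pi) := by rw [le_div_iff₀ (by positivity)]; linarith
      have h2 : 2 * (s/(2*Real.pi)) = s/Real.pi := by field_simp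
      have hb : 1 + s/(2*Real.pi) ≤ s/Real.pi := by linarith
      have hexp : (0:ℝ) < Real.exp (-s) := Real.exp_pos _
      have hpow : (1 + s/(2*Real.pi))^p ≤ (s/Real.pi)^p := by
        apply pow_le_pow_left₀ (by linarith) hb
      calc (1 + s/(2*Real.pi))^p * Real.exp (-s) ≤ (s/Real.pi)^p * Real.exp (-s) := by
            exact mul_le_mul_of_nonneg_right hpow hexp.le
        _ = (1/Real.pi)^p * (s^p * Real.exp (-s)) := by
            rw [div_pow, one_div, inv_pow]
            ring
    · simpa using (Real.tendsto_pow_mul_exp_neg_atTop_nhds_zero p).const_mul ((1/Real.pi)^p)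
  have h2 : Filter.Tendsto (fun r : ℝ => -Real.log r) (nhdsWithin 0 (Set.Ioi 0)) atTop :=
    Filter.tendsto_neg_atBot_atTop.comp Real.tendsto_log_nhdsGT_zero
  have h3 := h1.comp h2
  apply h3.congr'
  filter_upwards [Ioo_mem_nhdsGT_of_mem (Set.mem_Ico.2 ⟨le_refl (0:ℝ), one_pos⟩)] with r hr
  have hr0 : (0:ℝ) < r := hr.1
  have hr1 : r < 1 := hr.2
  have hlog : Real.log r < 0 := Real.log_neg hr0 hr1
  simp only [Function.comp]
  rw [neg_neg, Real.exp_log hr0, abs_of_neg hlog]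

lemma removable_at_zero {g : ℂ → ℂ} {C : ℝ} {p : ℕ}
    (hg : ∀ w : ℂ, w ≠ 0 → DifferentiableAt ℂ g w)
    (hb : ∀ w : ℂ, w ≠ 0 →
      ‖g w‖ ≤ C * (1 + |Real.log (‖w‖)|/(2*Real.pi))^p) :
    ∃ g' : ℂ → ℂ, Differentiable ℂ g' ∧ ∀ w : ℂ, w ≠ 0 → g' w = g w := by
  have hd : DifferentiableOn ℂ g ((Set.univ : Set ℂ) \ {0}) := fun w hw =>
    (hg w (by simpa using hw.2)).differentiableWithinAt
  have habs : Filter.Tendsto (fun z : ℂ => ‖z‖) (nhdsWithin 0 {(0:ℂ)}ᶜ)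
      (nhdsWithin 0 (Set.Ioi 0)) := by
    rw [tendsto_nhdsWithin_iff]
    constructor
    · have := (continuous_norm.tendsto (0:ℂ))
      simpa using this.mono_left nhdsWithin_le_nhds
    · filter_upwards [self_mem_nhdsWithin] with z hz
      simpa using norm_pos_iff.mpr (by simpa using hz)
  have hL : Filter.Tendsto
      (fun r : ℝ => C * ((1 + |Real.log r|/(2*Real.pi))^p * r) + ‖g 0‖ * r)
      (nhdsWithin 0 (Set.Ioi 0)) (nhds 0) := by
    have t1 := (tendsto_aux p).const_mul C
    have t2 : Filter.Tendsto (fun r : ℝ => ‖g 0‖ * r)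
        (nhdsWithin 0 (Set.Ioi 0)) (nhds 0) := by
      have hcont : Continuous (fun r : ℝ => ‖g 0‖ * r) :=
        continuous_const.mul continuous_id
      have := hcont.tendsto (0:ℝ)
      simp only [mul_zero] at this
      exact this.mono_left nhdsWithin_le_nhds
    simpa using t1.add t2
  have hT := hL.comp habs
  have ho : (fun z => g z - g 0) =o[nhdsWithin 0 {(0:ℂ)}ᶜ] fun z : ℂ => (z - 0)⁻¹ := by
    rw [Asymptotics.isLittleO_iff]
    intro ε hε
    filter_upwards [hT.eventually (eventually_lt_nhds hε), self_mem_nhdsWithin] with z hz hz0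
    have hz0' : z ≠ 0 := by simpa using hz0
    have habs0 : 0 < ‖z‖ := norm_pos_iff.mpr hz0'
    have hgz : ‖g z - g 0‖ ≤ C * (1 + |Real.log (‖z‖)|/(2*Real.pi))^p
        + ‖g 0‖ := by
      calc ‖g z - g 0‖ ≤ ‖g z‖ + ‖g 0‖ := norm_sub_le _ _
        _ ≤ _ := by
            exact add_le_add_left (hb z hz0') _
    have hmul : ‖g z - g 0‖ * ‖z‖ ≤ ε := by
      have := mul_le_mul_of_nonneg_right hgz habs0.le
      simp only [Function.comp] at hz
      calc ‖g z - g 0‖ * ‖z‖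
          ≤ (C * (1 + |Real.log (‖z‖)|/(2*Real.pi))^p + ‖g 0‖)
            * ‖z‖ := this
        _ = C * ((1 + |Real.log (‖z‖)|/(2*Real.pi))^p * ‖z‖)
            + ‖g 0‖ * ‖z‖ := by ring
        _ ≤ ε := hz.le
    rw [sub_zero, norm_inv]
    rw [← le_div_iff₀ habs0] at hmul
    calc ‖g z - g 0‖ ≤ ε / ‖z‖ := hmul
      _ = ε * (‖z‖)⁻¹ := by ring
  have H := Complex.differentiableOn_update_limUnder_of_isLittleO
    (Filter.univ_mem : (Set.univ : Set ℂ) ∈ nhds 0) hd ho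
  exact ⟨_, differentiableOn_univ.1 H, fun w hw => Function.update_of_ne hw _ _⟩


end StripLiouvilleAux

open StripLiouvilleAux in
/-- Liouville-type theorem on the closed strip `𝒯¹ = {z ∈ ℂ : 0 ≤ Im z ≤ 1}`:
if `F` is continuous on `𝒯¹`, holomorphic on its interior, satisfies the
`i`-periodic boundary condition `F(t + i) = F(t)` for all real `t`, and grows
at most polynomially in `Re z` on the strip, then `F` is constant on `𝒯¹`. -/
theorem strip_constant_of_periodic_of_polynomial_growth
    (F : ℂ → ℂ)
    (hcont : ContinuousOn F {z : ℂ | 0 ≤ z.im ∧ z.im ≤ 1})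
    (hdiff : DifferentiableOn ℂ F {z : ℂ | 0 < z.im ∧ z.im < 1})
    (hper : ∀ t : ℝ, F ((t : ℂ) + Complex.I) = F (t : ℂ))
    (C : ℝ) (hC : 0 < C) (p : ℕ)
    (hbd : ∀ z : ℂ, 0 ≤ z.im → z.im ≤ 1 → ‖F z‖ ≤ C * (1 + |z.re|) ^ p) :
    ∀ z w : ℂ, 0 ≤ z.im → z.im ≤ 1 → 0 ≤ w.im → w.im ≤ 1 → F z = F w := by
  classical
  set Fext : ℂ → ℂ := fun z => F ((z.re : ℂ) + (Int.fract z.im : ℝ) * I) with hFdef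
  -- `Fext` agrees with `F` on the strip
  have hFeq : ∀ z : ℂ, 0 ≤ z.im → z.im ≤ 1 → Fext z = F z := by
    intro z h0 h1
    rcases lt_or_eq_of_le h1 with hlt | heq
    · have : Int.fract z.im = z.im := Int.fract_eq_self.2 ⟨h0, hlt⟩
      rw [hFdef]
      simp only [this, Complex.re_add_im]
    · have hz : z = (z.re : ℂ) + I := by
        apply Complex.ext <;> simp [← heq]
      have h2 : Fext z = F (z.re : ℂ) := by
        simp only [hFdef]
        congr 1
        apply Complex.ext
        · simp
        · simp [heq, Int.fract_one]
      rw [h2]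
      conv_rhs => rw [hz]
      rw [hper]
  -- periodicity of `Fext`
  have hFper : ∀ (z : ℂ) (n : ℤ), Fext (z + (n:ℂ) * I) = Fext z := by
    intro z n
    simp only [hFdef]
    congr 1
    apply Complex.ext <;> simp [Int.fract_add_intCast]
  -- `Fext` on each translated strip
  have heqn : ∀ (n : ℤ) (z : ℂ), (n:ℝ) ≤ z.im → z.im ≤ (n:ℝ) + 1 →
      Fext z = F (z - (n:ℂ) * I) := by
    intro n z h0 h1
    rcases lt_or_eq_of_le h1 with hlt | heq
    · have hfl : ⌊z.im⌋ = n := Int.floor_eq_iff.2 ⟨h0, hlt⟩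
      have hfr : Int.fract z.im = z.im - n := by rw [Int.fract, hfl]
      rw [hFdef]
      simp only [hfr]
      congr 1
      apply Complex.ext <;> simp
    · have hfr : Int.fract z.im = 0 := by
        rw [heq]
        have h3 : ((n:ℝ) + 1) = ((n + 1 : ℤ) : ℝ) := by push_cast; ring
        rw [h3, Int.fract_intCast]
      have hz2 : z - (n:ℂ)*I = (z.re : ℂ) + I := by
        apply Complex.ext
        · simp
        · simp [heq]
      have h2 : Fext z = F (z.re : ℂ) := by
        simp only [hFdef, hfr]
        congr 1
        apply Complex.ext <;> simp
      rw [h2, hz2, hper]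
  have hmaps : ∀ (n : ℤ) (z : ℂ), (n:ℝ) ≤ z.im → z.im ≤ (n:ℝ) + 1 →
      (0 ≤ (z - (n:ℂ)*I).im ∧ (z - (n:ℂ)*I).im ≤ 1) := by
    intro n z h0 h1
    constructor <;> simp <;> linarith
  -- continuity of `Fext`
  have hcont_n : ∀ n : ℤ, ContinuousOn Fext {z : ℂ | (n:ℝ) ≤ z.im ∧ z.im ≤ (n:ℝ) + 1} := by
    intro n
    have h1 : ContinuousOn (fun z : ℂ => F (z - (n:ℂ)*I))
        {z : ℂ | (n:ℝ) ≤ z.im ∧ z.im ≤ (n:ℝ) + 1} := by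
      apply hcont.comp (Continuous.continuousOn (by continuity))
      intro z hz
      exact hmaps n z hz.1 hz.2
    exact h1.congr (fun z hz => heqn n z hz.1 hz.2)
  have hFc : Continuous Fext := by
    rw [continuous_iff_continuousAt]
    intro z
    set n := ⌊z.im⌋ with hn
    have hfl1 : (n:ℝ) ≤ z.im := Int.floor_le _
    have hfl2 : z.im < (n:ℝ) + 1 := Int.lt_floor_add_one _
    rcases eq_or_lt_of_le hfl1 with heq | hlt
    · -- z.im = n : use two strips
      have hcw1 : ContinuousWithinAt Fext {w : ℂ | (n:ℝ) ≤ w.im ∧ w.im ≤ (n:ℝ) + 1} z :=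
        (hcont_n n).continuousWithinAt ⟨hfl1, hfl2.le⟩
      have hcw2 : ContinuousWithinAt Fext
          {w : ℂ | ((n-1 : ℤ):ℝ) ≤ w.im ∧ w.im ≤ ((n-1:ℤ):ℝ) + 1} z := by
        apply (hcont_n (n-1)).continuousWithinAt
        constructor <;> push_cast <;> linarith
      have := hcw2.union hcw1
      apply this.continuousAt
      rw [_root_.mem_nhds_iff]
      refine ⟨Complex.im ⁻¹' Set.Ioo ((n:ℝ) - 1) ((n:ℝ) + 1), ?_, ?_, ?_⟩
      · intro w hw
        rcases le_total w.im (n:ℝ) with h | h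
        · left; constructor <;> push_cast <;> [linarith [hw.1]; linarith]
        · right; exact ⟨h, (hw.2).le⟩
      · exact isOpen_Ioo.preimage Complex.continuous_im
      · constructor <;> [linarith; linarith]
    · -- n < z.im : interior of strip n
      apply ((hcont_n n).continuousWithinAt ⟨hfl1, hfl2.le⟩).continuousAt
      rw [_root_.mem_nhds_iff]
      refine ⟨Complex.im ⁻¹' Set.Ioo ((n:ℝ)) ((n:ℝ) + 1), ?_, ?_, ?_⟩
      · exact fun w hw => ⟨hw.1.le, hw.2.le⟩
      · exact isOpen_Ioo.preimage Complex.continuous_im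
      · exact ⟨hlt, hfl2⟩
  -- differentiability off integer lines
  have hopen01 : IsOpen {w : ℂ | 0 < w.im ∧ w.im < 1} := by
    have : {w : ℂ | 0 < w.im ∧ w.im < 1} = Complex.im ⁻¹' Set.Ioo 0 1 := rfl
    rw [this]
    exact isOpen_Ioo.preimage Complex.continuous_im
  have hdiff_nonint : ∀ z : ℂ, z.im ≠ (⌊z.im⌋ : ℝ) → DifferentiableAt ℂ Fext z := by
    intro z hne
    set n := ⌊z.im⌋ with hn
    have hfl1 : (n:ℝ) ≤ z.im := Int.floor_le _
    have hfl2 : z.im < (n:ℝ) + 1 := Int.lt_floor_add_one _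
    have hlt : (n:ℝ) < z.im := lt_of_le_of_ne hfl1 (Ne.symm hne)
    have hF' : DifferentiableAt ℂ F (z - (n:ℂ)*I) := by
      apply hdiff.differentiableAt
      apply hopen01.mem_nhds
      constructor <;> simp <;> linarith
    have hcomp : DifferentiableAt ℂ (fun w : ℂ => F (w - (n:ℂ)*I)) z :=
      hF'.comp z (differentiableAt_id.sub (differentiableAt_const _))
    apply hcomp.congr_of_eventuallyEq
    have hOz : Complex.im ⁻¹' Set.Ioo ((n:ℝ)) ((n:ℝ)+1) ∈ nhds z :=
      (isOpen_Ioo.preimage Complex.continuous_im).mem_nhds ⟨hlt, hfl2⟩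
    filter_upwards [hOz] with w hw
    exact heqn n w hw.1.le hw.2.le
  -- full differentiability via the removable-line lemma
  have hFdiff : Differentiable ℂ Fext := by
    intro z
    by_cases hne : z.im = (⌊z.im⌋ : ℝ)
    swap
    · exact hdiff_nonint z hne
    · set n := ⌊z.im⌋ with hn
      apply removable_line one_pos hne hFc.continuousOn
      intro w hw hwne
      apply hdiff_nonint
      have hdist : |w.im - z.im| < 1 := by
        have h1 : |w.im - z.im| ≤ dist w z := by
          rw [Complex.dist_eq]
          simpa [Complex.sub_im] using Complex.abs_im_le_norm (w - z)
        have := mem_ball.1 hw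
        linarith
      rw [hne] at hdist
      rcases lt_or_gt_of_ne hwne with hlt | hgt
    
      · have hfl : ⌊w.im⌋ = n - 1 := by
          apply Int.floor_eq_iff.2
          constructor <;> push_cast <;> [linarith [abs_lt.1 hdist]; linarith [abs_lt.1 hdist]]
        rw [hfl]
        push_cast
        intro hcon
        rw [hcon] at hlt
        have := abs_lt.1 hdist
        push_cast at hlt
        linarith
      · have hfl : ⌊w.im⌋ = n := by
          apply Int.floor_eq_iff.2
          constructor <;> push_cast <;> [linarith; linarith [abs_lt.1 hdist]]
        rw [hfl]
        exact ne_of_gt hgt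
  -- polynomial growth bound for Fext
  have hFb : ∀ z : ℂ, ‖Fext z‖ ≤ C * (1 + |z.re|)^p := by
    intro z
    simp only [hFdef]
    have h1 := hbd ((z.re : ℂ) + (Int.fract z.im : ℝ) * I)
      (by simp [Int.fract_nonneg]) (by simp [(Int.fract_lt_one z.im).le])
    simpa using h1
  -- the quotient function on ℂ∖{0}
  have hpiC : ((2:ℂ)*(Real.pi:ℂ)) ≠ 0 := by
    simp [Complex.ofReal_ne_zero, Real.pi_ne_zero]
  set G : ℂ → ℂ := fun w => Fext (Complex.log w / ((2:ℂ)*(Real.pi:ℂ))) with hGdef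
  have hGF : ∀ z : ℂ, G (Complex.exp ((2:ℂ)*(Real.pi:ℂ)*z)) = Fext z := by
    intro z
    have h1 := Complex.exp_log (Complex.exp_ne_zero ((2:ℂ)*(Real.pi:ℂ)*z))
    rw [Complex.exp_eq_exp_iff_exists_int] at h1
    obtain ⟨k, hk⟩ := h1
    have harg : Complex.log (Complex.exp ((2:ℂ)*(Real.pi:ℂ)*z)) / ((2:ℂ)*(Real.pi:ℂ))
        = z + (k:ℂ)*I := by
      rw [hk]
      field_simp
    rw [hGdef]
    simp only []
    rw [harg]
    exact hFper z k
  -- differentiability of G away from 0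
  have hGdiff : ∀ w : ℂ, w ≠ 0 → DifferentiableAt ℂ G w := by
    intro w hw
    by_cases hsl : w ∈ Complex.slitPlane
    · have h1 : DifferentiableAt ℂ (fun v : ℂ => Complex.log v / ((2:ℂ)*(Real.pi:ℂ))) w :=
        (Complex.differentiableAt_log hsl).div_const _
      exact (hFdiff _).comp w h1
    · have hmem : -w ∈ Complex.slitPlane := by
        rw [Complex.mem_slitPlane_iff] at hsl ⊢
        push_neg at hsl
        left
        rcases hsl with ⟨h1, h2⟩
        have : w.re ≠ 0 := by
          intro hc
          exact hw (Complex.ext hc h2)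
        simp only [Complex.neg_re]
        cases lt_or_eq_of_le h1 with
        | inl h => linarith
        | inr h => exact absurd h this
      have hH : DifferentiableAt ℂ
          (fun v : ℂ => Fext (Complex.log (-v) / ((2:ℂ)*(Real.pi:ℂ)) + I/2)) w := by
        have h1 : DifferentiableAt ℂ (fun v : ℂ => Complex.log (-v)) w :=
          (Complex.differentiableAt_log hmem).comp w differentiableAt_id.neg
        exact (hFdiff _).comp w ((h1.div_const _).add_const _)
      apply hH.congr_of_eventuallyEq
      have hne : {(0:ℂ)}ᶜ ∈ nhds w := (isOpen_compl_singleton).mem_nhds (by simpa using hw)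
      filter_upwards [hne] with v hv
      have hv0 : v ≠ 0 := by simpa using hv
      have hvneg : -v ≠ 0 := neg_ne_zero.2 hv0
      have hexp : Complex.exp ((2:ℂ)*(Real.pi:ℂ)*(Complex.log (-v) / ((2:ℂ)*(Real.pi:ℂ)) + I/2))
          = v := by
        have harg : (2:ℂ)*(Real.pi:ℂ)*(Complex.log (-v) / ((2:ℂ)*(Real.pi:ℂ)) + I/2)
            = Complex.log (-v) + (Real.pi:ℂ)*I := by
          field_simp
        rw [harg, Complex.exp_add, Complex.exp_log hvneg, Complex.exp_pi_mul_I]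
        ring
      calc G v = G (Complex.exp ((2:ℂ)*(Real.pi:ℂ)*(Complex.log (-v) / ((2:ℂ)*(Real.pi:ℂ)) + I/2))) := by
            rw [hexp]
        _ = Fext (Complex.log (-v) / ((2:ℂ)*(Real.pi:ℂ)) + I/2) := hGF _
    -- growth bound for G
  have hGb : ∀ w : ℂ, w ≠ 0 →
      ‖G w‖ ≤ C * (1 + |Real.log (‖w‖)|/(2*Real.pi))^p := by
    intro w hw
    have hre : (Complex.log w / ((2:ℂ)*(Real.pi:ℂ))).re
        = Real.log (‖w‖) / (2*Real.pi) := by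
      have h2 : ((2:ℂ)*(Real.pi:ℂ)) = (((2*Real.pi : ℝ)):ℂ) := by push_cast; ring
      rw [h2, Complex.div_ofReal_re, Complex.log_re]
    have h1 := hFb (Complex.log w / ((2:ℂ)*(Real.pi:ℂ)))
    rw [hGdef]
    simp only []
    rw [hre] at h1
    have h3 : |Real.log (‖w‖) / (2*Real.pi)|
        = |Real.log (‖w‖)| / (2*Real.pi) := by
      rw [abs_div, abs_of_pos (by positivity : (0:ℝ) < 2*Real.pi)]
    rw [h3] at h1
    exact h1
  -- remove the singularities at 0 and ∞
  obtain ⟨G1, hG1d, hG1⟩ := removable_at_zero hGdiff hGb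
  have hG2diff : ∀ w : ℂ, w ≠ 0 → DifferentiableAt ℂ (fun v : ℂ => G v⁻¹) w := by
    intro w hw
    exact (hGdiff _ (inv_ne_zero hw)).comp w (differentiableAt_id.inv hw)
  have hG2b : ∀ w : ℂ, w ≠ 0 →
      ‖G w⁻¹‖ ≤ C * (1 + |Real.log (‖w‖)|/(2*Real.pi))^p := by
    intro w hw
    have := hGb w⁻¹ (inv_ne_zero hw)
    rwa [norm_inv, Real.log_inv, abs_neg] at this
  obtain ⟨G2, hG2d, hG2⟩ := removable_at_zero hG2diff hG2b
  -- boundedness of G1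
  have hbdd : Bornology.IsBounded (Set.range G1) := by
    have hK1 : Bornology.IsBounded (G1 '' Metric.closedBall 0 1) :=
      ((isCompact_closedBall (0:ℂ) 1).image hG1d.continuous).isBounded
    have hK2 : Bornology.IsBounded (G2 '' Metric.closedBall 0 1) :=
      ((isCompact_closedBall (0:ℂ) 1).image hG2d.continuous).isBounded
    apply (hK1.union hK2).subset
    rintro y ⟨w, rfl⟩
    rcases le_or_gt (‖w‖) 1 with h | h
    · left
      exact ⟨w, by simpa [Complex.dist_eq] using h, rfl⟩
    · right
      have hw0 : w ≠ 0 := by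
        intro hc
        rw [hc] at h
        simp at h
        linarith
      refine ⟨w⁻¹, ?_, ?_⟩
      · simp only [Metric.mem_closedBall, Complex.dist_eq, sub_zero]
        rw [norm_inv]
        exact inv_le_one_of_one_le₀ h.le
      · rw [hG2 w⁻¹ (inv_ne_zero hw0), inv_inv, hG1 w hw0]
  have hconst := hG1d.apply_eq_apply_of_bounded hbdd
  -- conclusion
  intro z w hz1 hz2 hw1 hw2
  calc F z = Fext z := (hFeq z hz1 hz2).symm
    _ = G (Complex.exp ((2:ℂ)*(Real.pi:ℂ)*z)) := (hGF z).symm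
    _ = G1 (Complex.exp ((2:ℂ)*(Real.pi:ℂ)*z)) := (hG1 _ (Complex.exp_ne_zero _)).symm
    _ = G1 (Complex.exp ((2:ℂ)*(Real.pi:ℂ)*w)) := hconst _ _
    _ = G (Complex.exp ((2:ℂ)*(Real.pi:ℂ)*w)) := hG1 _ (Complex.exp_ne_zero _)
    _ = Fext w := hGF w
    _ = F w := hFeq w hw1 hw2
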